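/- Ideal version of the Lorentz–Macphail theorem: Let X, Y be Banach spaces, (T_n) a sequence of linear operators in L(X,Y), and (M_n) a decreasing sequence of closed linear subspaces of X such that each T_n is bounded on M_n. Let J be a strongly selective ideal on ℕ, and suppose that for every x ∈ X the sequence (T_n x) is J-bounded. Then there exist n₀ ∈ ℕ and J* ∈ J^⋆ (the dual filter) such that T_n is bounded on M_{n₀} for all n ∈ J*. -/

import Mathlib

/-- Ideal version of the Lorentz–Macphail theorem: if `J` is a strongly selective ideal,
`(M n)` is a decreasing sequence of closed subspaces with each `T n` bounded on `M n`, and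
`(T n x)` is `J`-bounded for every `x`, then there are `n₀` and `J* ∈ J^⋆` such that `T n`
is bounded on `M n₀` for every `n ∈ J*`. -/
theorem stmt14 {X Y : Type*} [NormedAddCommGroup X] [NormedSpace ℝ X] [CompleteSpace X]
    [NormedAddCommGroup Y] [NormedSpace ℝ Y] [CompleteSpace Y]
    (J : Set (Set ℕ))
    (hJ_sub : ∀ S S' : Set ℕ, S ∈ J → S' ⊆ S → S' ∈ J)
    (hJ_union : ∀ S S' : Set ℕ, S ∈ J → S' ∈ J → S ∪ S' ∈ J)
    (hJ_fin : ∀ S : Set ℕ, S.Finite → S ∈ J)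
    (hJ_proper : Set.univ ∉ J)
    (hJ_sel : ∀ S : ℕ → Set ℕ, (∀ n, S (n + 1) ⊆ S n) → (∀ n, S n ∉ J) →
      ∃ x : ℕ → ℕ, StrictMono x ∧ Set.range x ∉ J ∧ ∀ n, x (n + 1) ∈ S (x n))
    (T : ℕ → X →ₗ[ℝ] Y)
    (M : ℕ → Submodule ℝ X)
    (hM_closed : ∀ n, IsClosed (M n : Set X))
    (hM_dec : ∀ n, M (n + 1) ≤ M n)
    (hTM : ∀ n, ∃ C : ℝ, ∀ x ∈ M n, ‖T n x‖ ≤ C * ‖x‖)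
    (hbd : ∀ x : X, ∃ r : ℝ, {n | r ≤ ‖T n x‖} ∈ J) :
    ∃ n₀ : ℕ, ∃ Js : Set ℕ, Jsᶜ ∈ J ∧
      ∀ n ∈ Js, ∃ C : ℝ, ∀ x ∈ M n₀, ‖T n x‖ ≤ C * ‖x‖ := by
  classical
  set U : ℕ → Set ℕ := fun n₀ => {n | ¬ ∃ C : ℝ, ∀ x ∈ M n₀, ‖T n x‖ ≤ C * ‖x‖} with hU
  rcases Classical.em (∃ n₀, U n₀ ∈ J) with ⟨n₀, hn₀⟩ | h
  · refine ⟨n₀, (U n₀)ᶜ, by rwa [compl_compl], fun n hn => not_not.mp hn⟩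
  · exfalso
    push_neg at h
    -- U is decreasing
    have hMantitone : Antitone M := antitone_nat_of_succ_le hM_dec
    have hUdec : ∀ n, U (n + 1) ⊆ U n := by
      intro n m hm
      simp only [hU, Set.mem_setOf_eq] at hm ⊢
      intro ⟨C, hC⟩
      exact hm ⟨C, fun x hx => hC x (hM_dec n hx)⟩
    obtain ⟨k, hkmono, hkrange, hkstep⟩ := hJ_sel U hUdec h
    -- unboundedness along the selected sequence
    have hunb : ∀ n, ∀ C : ℝ, ∃ x ∈ M (k n), C * ‖x‖ < ‖T (k (n + 1)) x‖ := by
      intro n C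
      have := hkstep n
      simp only [hU, Set.mem_setOf_eq] at this
      push_neg at this
      exact this C
    -- boundedness constants
    choose C0 hC0 using hTM
    set C : ℕ → ℝ := fun n => max (C0 (k n)) 0 with hCdef
    have hCnonneg : ∀ n, 0 ≤ C n := fun n => le_max_right _ _
    have hC : ∀ n, ∀ x ∈ M (k n), ‖T (k n) x‖ ≤ C n * ‖x‖ := by
      intro n x hx
      exact le_trans (hC0 (k n) x hx)
        (mul_le_mul_of_nonneg_right (le_max_left _ _) (norm_nonneg _))
    -- scaling lemma
    have hscale : ∀ (n : ℕ) (R ε : ℝ), 0 < ε →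
        ∃ w ∈ M (k n), ‖w‖ ≤ ε ∧ R ≤ ‖T (k (n + 1)) w‖ := by
      intro n R ε hε
      obtain ⟨y, hyM, hy⟩ := hunb n (max R 1 / ε)
      have hy0 : 0 < ‖y‖ := by
        rcases eq_or_lt_of_le (norm_nonneg y) with h0 | h0
        · exfalso
          have : y = 0 := norm_eq_zero.mp h0.symm
          rw [this] at hy
          simp at hy
        · exact h0
      refine ⟨(ε / ‖y‖) • y, Submodule.smul_mem _ _ hyM, ?_, ?_⟩
      · rw [norm_smul, Real.norm_eq_abs, abs_of_pos (div_pos hε hy0)]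
        rw [div_mul_cancel₀]
        exact hy0.ne'
      · rw [map_smul, norm_smul, Real.norm_eq_abs, abs_of_pos (div_pos hε hy0)]
        have h1 : max R 1 / ε * ‖y‖ < ‖T (k (n + 1)) y‖ := hy
        have h2 : max R 1 ≤ ε / ‖y‖ * ‖T (k (n + 1)) y‖ := by
          rw [div_mul_eq_mul_div, le_div_iff₀ hy0]
          calc max R 1 * ‖y‖ = ε * (max R 1 / ε * ‖y‖) := by
                field_simp
            _ ≤ ε * ‖T (k (n + 1)) y‖ := by
                exact mul_le_mul_of_nonneg_left h1.le hε.le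
            _ = ε * ‖T (k (n + 1)) y‖ * 1 := by ring
            _ = _ := by ring
        exact le_trans (le_max_left _ _) h2
    -- the recursive step
    have h_step : ∀ (n : ℕ) (s : X), ∃ w, w ∈ M (k (n + 1)) ∧ ‖w‖ ≤ (1 / 2 : ℝ) ^ (n + 1) ∧
        (n : ℝ) + 1 + ‖T (k (n + 2)) s‖ + C (n + 2) * (1 / 2) ^ (n + 1)
          ≤ ‖T (k (n + 2)) w‖ := by
      intro n s
      obtain ⟨w, hw1, hw2, hw3⟩ := hscale (n + 1)
        ((n : ℝ) + 1 + ‖T (k (n + 2)) s‖ + C (n + 2) * (1 / 2) ^ (n + 1))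
        ((1 / 2 : ℝ) ^ (n + 1)) (by positivity)
      exact ⟨w, hw1, hw2, hw3⟩
    choose g hg1 hg2 hg3 using h_step
    -- recursive construction: F n = (v n, partial sum up to n)
    set F : ℕ → X × X := fun n =>
      Nat.rec ((0 : X), (0 : X)) (fun m p => (g m p.2, p.2 + g m p.2)) n with hFdef
    set v : ℕ → X := fun n => (F n).1 with hvdef
    have hFsucc : ∀ n, F (n + 1) = (g n (F n).2, (F n).2 + g n (F n).2) := fun n => rfl
    have hvsucc : ∀ n, v (n + 1) = g n (F n).2 := fun n => rfl
    have hFsum : ∀ n, (F n).2 = ∑ m ∈ Finset.range (n + 1), v m := by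
      intro n
      induction n with
      | zero => simp [hFdef, hvdef]
      | succ n ih =>
        rw [hFsucc, Finset.sum_range_succ, ← ih, ← hvsucc]
    have hv_mem : ∀ n, v n ∈ M (k n) := by
      intro n
      cases n with
      | zero => exact Submodule.zero_mem _
      | succ n => exact hg1 n _
    have hvnorm : ∀ n, ‖v n‖ ≤ (1 / 2 : ℝ) ^ n := by
      intro n
      cases n with
      | zero => simp [hvdef, hFdef]
      | succ n => exact hg2 n _
    have hsum : Summable v :=
      Summable.of_norm_bounded summable_geometric_two hvnorm
    set x := ∑' n, v n with hxdef
    -- tail estimates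
    have htailsum : ∀ j : ℕ, Summable fun m => v (m + j) :=
      fun j => (summable_nat_add_iff j).2 hsum
    have htailmem : ∀ j : ℕ, (∑' m, v (m + j)) ∈ M (k j) := by
      intro j
      refine (hM_closed (k j)).mem_of_tendsto ((htailsum j).hasSum.tendsto_sum_nat)
        (Filter.Eventually.of_forall fun i => ?_)
      refine Submodule.sum_mem _ fun m _ => ?_
      exact hMantitone (hkmono.monotone (Nat.le_add_left j m)) (hv_mem (m + j))
    have htailnorm : ∀ j : ℕ, ‖∑' m, v (m + j)‖ ≤ 2 * (1 / 2 : ℝ) ^ j := by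
      intro j
      have hsn : Summable fun m => ‖v (m + j)‖ := by
        refine Summable.of_nonneg_of_le (fun m => norm_nonneg _)
          (fun m => hvnorm (m + j)) ?_
        exact (summable_nat_add_iff j).2 summable_geometric_two
      have hg : Summable fun m : ℕ => (1 / 2 : ℝ) ^ (m + j) :=
        (summable_nat_add_iff j).2 summable_geometric_two
      calc ‖∑' m, v (m + j)‖ ≤ ∑' m, ‖v (m + j)‖ := norm_tsum_le_tsum_norm hsn
        _ ≤ ∑' m : ℕ, (1 / 2 : ℝ) ^ (m + j) :=
            Summable.tsum_le_tsum (fun m => hvnorm (m + j)) hsn hg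
        _ = ∑' m : ℕ, (1 / 2 : ℝ) ^ m * (1 / 2) ^ j := by
            congr 1; funext m; rw [pow_add]
        _ = (∑' m : ℕ, (1 / 2 : ℝ) ^ m) * (1 / 2) ^ j := tsum_mul_right
        _ = 2 * (1 / 2 : ℝ) ^ j := by rw [tsum_geometric_two]
    -- main estimate
    have hmain : ∀ n : ℕ, (n : ℝ) + 1 ≤ ‖T (k (n + 2)) x‖ := by
      intro n
      set s := (F n).2 with hsdef
      set w := v (n + 1) with hwdef
      set t := ∑' m, v (m + (n + 2)) with htdef
      have hxeq : x = s + w + t := by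
        rw [hxdef, ← Summable.sum_add_tsum_nat_add (n + 2) hsum, ← htdef]
        congr 1
        rw [Finset.sum_range_succ, hsdef, hwdef, ← hFsum n]
      have hTt : ‖T (k (n + 2)) t‖ ≤ C (n + 2) * (2 * (1 / 2 : ℝ) ^ (n + 2)) := by
        refine le_trans (hC (n + 2) t (htailmem (n + 2))) ?_
        exact mul_le_mul_of_nonneg_left (htailnorm (n + 2)) (hCnonneg (n + 2))
      have h2eq : (2 : ℝ) * (1 / 2 : ℝ) ^ (n + 2) = (1 / 2 : ℝ) ^ (n + 1) := by
        rw [pow_succ]; ring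
      rw [h2eq] at hTt
      have hw3 := hg3 n s
      rw [← hvsucc n, ← hwdef] at hw3
      have hTw : ‖T (k (n + 2)) w‖ ≤ ‖T (k (n + 2)) x‖ + ‖T (k (n + 2)) s‖
          + ‖T (k (n + 2)) t‖ := by
        have : T (k (n + 2)) w = T (k (n + 2)) x - T (k (n + 2)) s - T (k (n + 2)) t := by
          rw [hxeq]; simp [map_add]; abel
        rw [this]
        calc ‖T (k (n + 2)) x - T (k (n + 2)) s - T (k (n + 2)) t‖
            ≤ ‖T (k (n + 2)) x - T (k (n + 2)) s‖ + ‖T (k (n + 2)) t‖ := norm_sub_le _ _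
          _ ≤ ‖T (k (n + 2)) x‖ + ‖T (k (n + 2)) s‖ + ‖T (k (n + 2)) t‖ := by
              have := norm_sub_le (T (k (n + 2)) x) (T (k (n + 2)) s)
              linarith
      linarith
    -- final contradiction
    obtain ⟨r, hr⟩ := hbd x
    set N : ℕ := max 1 ⌈r⌉₊ with hNdef
    have hrange : Set.range k ⊆ {n | r ≤ ‖T n x‖} ∪ (k '' Set.Iic (N + 1)) := by
      rintro _ ⟨m, rfl⟩
      rcases le_or_gt m (N + 1) with hm | hm
      · exact Or.inr ⟨m, hm, rfl⟩
      · left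
        obtain ⟨n, rfl⟩ : ∃ n, m = n + 2 := ⟨m - 2, by omega⟩
        have hnN : N ≤ n := by omega
        have hrn : r ≤ (n : ℝ) + 1 := by
          calc r ≤ (⌈r⌉₊ : ℝ) := Nat.le_ceil r
            _ ≤ (N : ℝ) := by exact_mod_cast Nat.cast_le.mpr (le_max_right _ _)
            _ ≤ (n : ℝ) := by exact_mod_cast hnN
            _ ≤ (n : ℝ) + 1 := by linarith
        exact Set.mem_setOf_eq ▸ le_trans hrn (hmain n)
    exact hkrange (hJ_sub _ _ (hJ_union _ _ hr
      (hJ_fin _ ((Set.finite_Iic (N + 1)).image k))) hrange)
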